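/- Every finitely-branching UWSTS is equivalent (recognizes the same language) to a deterministic UWSTS; concretely, the powerset-style system whose configurations are finitary downward-closed subsets of S ordered by inclusion, with unique initial configuration ↓I, deterministic transitions X →ᵃ ↓Succ_a(X), and final configurations those sets intersecting F, is a deterministic UWSTS with the same language. -/

import Mathlib

/-- `Reaches T s w t`: configuration `s` reaches `t` along the word `w`. -/
inductive Reaches {S A : Type*} (T : S → A → S → Prop) : S → List A → S → Prop where
  | nil (s : S) : Reaches T s [] s
  | cons {s r t : S} {a : A} {w : List A} :
      T s a r → Reaches T r w t → Reaches T s (a :: w) t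

/-- The language of an LTS. -/
def language {S A : Type*} (T : S → A → S → Prop) (I F : Set S) : Set (List A) :=
  {w | ∃ i ∈ I, ∃ f ∈ F, Reaches T i w f}

/-- The downward closure of a set. -/
def downClosure {X : Type*} (r : X → X → Prop) (U : Set X) : Set X :=
  {x | ∃ u ∈ U, r x u}

/-- A finitary downward closed set: the downward closure of a finite set. -/
def FinitaryDownClosed {X : Type*} (r : X → X → Prop) (D : Set X) : Prop :=
  ∃ U : Set X, U.Finite ∧ D = downClosure r U

/-- The set of `a`-successors of `Y`. -/
def Succ {S A : Type*} (T : S → A → S → Prop) (a : A) (Y : Set S) : Set S :=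
  {t | ∃ s ∈ Y, T s a t}

/-- The deterministic run of the powerset system. -/
def detRun {S A : Type*} (T : S → A → S → Prop) (pre : S → S → Prop) :
    Set S → List A → Set S
  | X, [] => X
  | X, a :: w => detRun T pre (downClosure pre (Succ T a X)) w

lemma detRun_reaches {S A : Type*} (T : S → A → S → Prop) (pre : S → S → Prop)
    (X : Set S) (w : List A) :
    Reaches (fun (X : Set S) (a : A) (Y : Set S) => Y = downClosure pre (Succ T a X))
      X w (detRun T pre X w) := by
  induction w generalizing X with
  | nil => exact Reaches.nil X
  | cons a w ih => exact Reaches.cons rfl (ih _)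

lemma reaches_detRun {S A : Type*} {T : S → A → S → Prop} {pre : S → S → Prop}
    {X Y : Set S} {w : List A}
    (h : Reaches (fun (X : Set S) (a : A) (Y : Set S) => Y = downClosure pre (Succ T a X))
      X w Y) : Y = detRun T pre X w := by
  induction h with
  | nil s => rfl
  | cons hs _ ih => subst hs; exact ih

lemma sublistForall₂_mem {α : Type*} {r : α → α → Prop} {l₁ l₂ : List α}
    (h : List.SublistForall₂ r l₁ l₂) : ∀ a ∈ l₁, ∃ b ∈ l₂, r a b := by
  induction h with
  | nil => intro a ha; simp at ha
  | cons hr _ ih =>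
      intro x hx
      rcases List.mem_cons.1 hx with rfl | hx
      · exact ⟨_, List.mem_cons_self, hr⟩
      · obtain ⟨b, hb, hrb⟩ := ih x hx
        exact ⟨b, List.mem_cons_of_mem _ hb, hrb⟩
  | cons_right _ ih =>
      intro x hx
      obtain ⟨b, hb, hrb⟩ := ih x hx
      exact ⟨b, List.mem_cons_of_mem _ hb, hrb⟩

lemma reaches_mono {S A : Type*} {T : S → A → S → Prop} {pre : S → S → Prop}
    (hcompat : ∀ ⦃s s' r : S⦄ ⦃a : A⦄, pre s s' → T s a r → ∃ r', T s' a r' ∧ pre r r')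
    {s t : S} {w : List A} (h : Reaches T s w t) :
    ∀ s', pre s s' → ∃ t', Reaches T s' w t' ∧ pre t t' := by
  induction h with
  | nil s => exact fun s' hs => ⟨s', Reaches.nil s', hs⟩
  | cons hT _ ih =>
      intro s' hs
      obtain ⟨r', hT', hr⟩ := hcompat hs hT
      obtain ⟨t', hre, ht⟩ := ih r' hr
      exact ⟨t', Reaches.cons hT' hre, ht⟩

lemma detRun_sound {S A : Type*} {T : S → A → S → Prop} {pre : S → S → Prop}
    (hrefl : Reflexive pre) (htrans : Transitive pre)
    (hcompat : ∀ ⦃s s' r : S⦄ ⦃a : A⦄, pre s s' → T s a r → ∃ r', T s' a r' ∧ pre r r') :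
    ∀ (w : List A) (X : Set S) (t : S), t ∈ detRun T pre X w →
      ∃ s ∈ X, ∃ t', Reaches T s w t' ∧ pre t t' := by
  intro w
  induction w with
  | nil => exact fun X t ht => ⟨t, ht, t, Reaches.nil t, hrefl t⟩
  | cons a w ih =>
      intro X t ht
      obtain ⟨s, hs, t', hre, htt'⟩ := ih _ t ht
      obtain ⟨r, ⟨s₀, hs₀, hT⟩, hsr⟩ := hs
      obtain ⟨t'', hre'', ht''⟩ := reaches_mono hcompat hre r hsr
      exact ⟨s₀, hs₀, t'', Reaches.cons hT hre'', htrans htt' ht''⟩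

lemma detRun_complete {S A : Type*} {T : S → A → S → Prop} {pre : S → S → Prop}
    (hrefl : Reflexive pre) {s f : S} {w : List A} (h : Reaches T s w f) :
    ∀ X : Set S, s ∈ X → f ∈ detRun T pre X w := by
  induction h with
  | nil s => exact fun X hs => hs
  | cons hT _ ih =>
      intro X hs
      exact ih _ ⟨_, ⟨_, hs, hT⟩, hrefl _⟩

/-- Every finitely-branching UWSTS is equivalent to a deterministic UWSTS:
the powerset-style system on finitary downward-closed subsets, ordered by
inclusion, with unique initial configuration `↓I`, deterministic transitions
`X →ᵃ ↓Succ_a(X)` and final configurations the sets meeting `F`, is a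
deterministic UWSTS recognizing the same language. -/
theorem finitely_branching_UWSTS_determinization
    {S A : Type*} (T : S → A → S → Prop) (pre : S → S → Prop)
    (I F : Set S)
    (hrefl : Reflexive pre) (htrans : Transitive pre)
    (hwqo : ∀ f : ℕ → S, ∃ i j : ℕ, i < j ∧ pre (f i) (f j))
    (hcompat : ∀ ⦃s s' r : S⦄ ⦃a : A⦄, pre s s' → T s a r →
      ∃ r', T s' a r' ∧ pre r r')
    (hFup : ∀ ⦃f f'⦄, f ∈ F → pre f f' → f' ∈ F)
    -- finite branching
    (hIfin : I.Finite)
    (hbranch : ∀ (s : S) (a : A), {r | T s a r}.Finite) :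
    -- the state space (finitary downward-closed sets ordered by inclusion) is a wqo
    (∀ f : ℕ → Set S, (∀ n, FinitaryDownClosed pre (f n)) →
      ∃ i j : ℕ, i < j ∧ f i ⊆ f j) ∧
    -- the initial configuration is a finitary downward-closed set
    FinitaryDownClosed pre (downClosure pre I) ∧
    -- transitions stay within the finitary downward-closed sets
    (∀ (X : Set S) (a : A), FinitaryDownClosed pre X →
      FinitaryDownClosed pre (downClosure pre (Succ T a X))) ∧
    -- the transition relation is deterministic (by construction)
    (∀ (X : Set S) (a : A), ∃! Y : Set S, Y = downClosure pre (Succ T a X)) ∧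
    -- upward compatibility of the powerset system w.r.t. inclusion
    (∀ (X Y : Set S) (a : A), X ⊆ Y →
      downClosure pre (Succ T a X) ⊆ downClosure pre (Succ T a Y)) ∧
    -- the set of final configurations is upward closed w.r.t. inclusion
    (∀ X Y : Set S, (X ∩ F).Nonempty → X ⊆ Y → (Y ∩ F).Nonempty) ∧
    -- the powerset system recognizes the same language
    language (fun (X : Set S) (a : A) (Y : Set S) => Y = downClosure pre (Succ T a X))
      {downClosure pre I} {X : Set S | (X ∩ F).Nonempty} = language T I F := by
  haveI : IsRefl S pre := ⟨hrefl⟩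
  haveI : IsTrans S pre := ⟨fun _ _ _ => fun h1 h2 => htrans h1 h2⟩
  refine ⟨?_, ?_, ?_, ?_, ?_, ?_, ?_⟩
  · -- wqo on finitary downward-closed sets
    intro f hf
    choose U hUfin hUeq using hf
    have hpwo : (Set.univ : Set S).PartiallyWellOrderedOn pre := fun g => hwqo (fun n => (g n).1)
    haveI : IsPreorder S pre := { refl := hrefl, trans := fun _ _ _ h1 h2 => htrans h1 h2 }
    have hlist := Set.PartiallyWellOrderedOn.partiallyWellOrderedOn_sublistForall₂ pre hpwo
    obtain ⟨m, n, hmn, hsub⟩ := hlist.exists_lt (f := fun n => (hUfin n).toFinset.toList)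
      (fun n x _ => Set.mem_univ x)
    refine ⟨m, n, hmn, ?_⟩
    rw [hUeq m, hUeq n]
    rintro x ⟨u, hu, hxu⟩
    have hu' : u ∈ (hUfin m).toFinset.toList := by
      simp [Set.Finite.mem_toFinset, hu]
    obtain ⟨v, hv, huv⟩ := sublistForall₂_mem hsub u hu'
    have hv' : v ∈ U n := by simpa [Set.Finite.mem_toFinset] using hv
    exact ⟨v, hv', htrans hxu huv⟩
  · exact ⟨I, hIfin, rfl⟩
  · -- transitions preserve finitary downward-closedness
    rintro X a ⟨U, hUfin, rfl⟩
    refine ⟨Succ T a U, ?_, ?_⟩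
    · have : Succ T a U = ⋃ u ∈ U, {t | T u a t} := by
        ext t; simp [Succ]
      rw [this]
      exact hUfin.biUnion fun u _ => hbranch u a
    · ext t
      constructor
      · rintro ⟨t₀, ⟨s, ⟨u, hu, hsu⟩, hT⟩, htt₀⟩
        obtain ⟨t₁, hT₁, ht₀t₁⟩ := hcompat hsu hT
        exact ⟨t₁, ⟨u, hu, hT₁⟩, htrans htt₀ ht₀t₁⟩
      · rintro ⟨t₀, ⟨u, hu, hT⟩, htt₀⟩
        exact ⟨t₀, ⟨u, ⟨u, hu, hrefl u⟩, hT⟩, htt₀⟩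
  · exact fun X a => ⟨_, rfl, fun Y hY => hY⟩
  · -- monotonicity
    rintro X Y a hXY t ⟨t₀, ⟨s, hs, hT⟩, htt₀⟩
    exact ⟨t₀, ⟨s, hXY hs, hT⟩, htt₀⟩
  · rintro X Y ⟨x, hxX, hxF⟩ hXY
    exact ⟨x, hXY hxX, hxF⟩
  · -- same language
    ext w
    constructor
    · rintro ⟨X₀, hX₀, Xf, hXf, hr⟩
      rw [Set.mem_singleton_iff] at hX₀
      subst hX₀
      have hXfeq := reaches_detRun hr
      obtain ⟨f, hfX, hfF⟩ := hXf
      rw [hXfeq] at hfX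
      obtain ⟨s, ⟨i, hi, hsi⟩, t', hre, hft'⟩ :=
        detRun_sound hrefl htrans hcompat w _ f hfX
      obtain ⟨t'', hre'', ht''⟩ := reaches_mono hcompat hre i hsi
      exact ⟨i, hi, t'', hFup (hFup hfF hft') ht'', hre''⟩
    · rintro ⟨i, hi, f, hf, hr⟩
      refine ⟨downClosure pre I, rfl, detRun T pre (downClosure pre I) w,
        ⟨f, ?_, hf⟩, detRun_reaches T pre _ w⟩
      exact detRun_complete hrefl hr _ ⟨i, hi, hrefl i⟩
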